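/- For k odd and n even, every W[1]-parameterized Resolution refutation of (Ψ_{n,k}, k) must contain, among the axiom clauses it uses, every clause of Γ_Ψ, and hence has size at least binom(n/2, (k+1)/2). (This is the lower bound of the Lemma in Section 3.1, stated there as size at least (n/2)^{k/2}.) -/

import Mathlib

/-- A clause is a finite set of literals; a literal is a pair (variable, polarity). -/
abbrev Clause (V : Type) := Finset (V × Bool)

/-- An assignment satisfies a clause if it makes some literal of the clause true. -/
def satClause {V : Type} (α : V → Bool) (C : Clause V) : Prop :=
  ∃ l ∈ C, α l.1 = l.2

/-- An assignment satisfies a CNF (a set of clauses) if it satisfies every clause. -/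
def satCNF {V : Type} (α : V → Bool) (F : Set (Clause V)) : Prop :=
  ∀ C ∈ F, satClause α C

/-- A Resolution refutation of a set `F` of clauses: a finite sequence of clauses ending in
the empty clause, each clause being an axiom of `F`, a resolvent of two earlier clauses
(from `P ∨ x` and `Q ∨ ¬x` derive `P ∨ Q`), or a weakening of an earlier clause
(from `P` derive `P ∨ l`). Its size is the length of the sequence. -/
structure ResRefutation {V : Type} [DecidableEq V] (F : Set (Clause V)) where
  seq : List (Clause V)
  ne : seq ≠ []
  lastEmpty : seq.getLast ne = (∅ : Clause V)
  valid : ∀ i (hi : i < seq.length),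
    (seq[i]'hi ∈ F) ∨
    (∃ (j l : ℕ) (hj : j < i) (hl : l < i) (x : V) (P Q : Clause V),
      seq[j]'(hj.trans hi) = insert (x, true) P ∧
      seq[l]'(hl.trans hi) = insert (x, false) Q ∧
      seq[i]'hi = P ∪ Q) ∨
    (∃ (j : ℕ) (hj : j < i) (lit : V × Bool),
      seq[i]'hi = insert lit (seq[j]'(hj.trans hi)))

/-- The size of a Resolution refutation: the length of its sequence of clauses. -/
def ResRefutation.size {V : Type} [DecidableEq V] {F : Set (Clause V)}
    (π : ResRefutation F) : ℕ :=
  π.seq.length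

/-- Tree-Resolution derivations from the clause set `F`: each clause occurrence is used as a
premise of at most one inference. A tree-Resolution refutation of `F` is a `ResTree F ∅`. -/
inductive ResTree {V : Type} [DecidableEq V] (F : Set (Clause V)) : Clause V → Type where
  | ax (C : Clause V) (h : C ∈ F) : ResTree F C
  | res (x : V) (P Q : Clause V) (t₁ : ResTree F (insert (x, true) P))
      (t₂ : ResTree F (insert (x, false) Q)) : ResTree F (P ∪ Q)
  | weak (l : V × Bool) (C : Clause V) (t : ResTree F C) : ResTree F (insert l C)

/-- The size of a tree-Resolution derivation: its number of clause occurrences. -/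
def ResTree.size {V : Type} [DecidableEq V] {F : Set (Clause V)} :
    ∀ {C : Clause V}, ResTree F C → ℕ
  | _, .ax _ _ => 1
  | _, .res _ _ _ t₁ t₂ => t₁.size + t₂.size + 1
  | _, .weak _ _ t => t.size + 1

/-- The clauses `¬x_{i₁} ∨ ⋯ ∨ ¬x_{i_{k+1}}` over the variables in `Vars`. -/
def negClausesOn {V : Type} [DecidableEq V] (Vars : Finset V) (k : ℕ) : Set (Clause V) :=
  {C | ∃ S : Finset V, S ⊆ Vars ∧ S.card = k + 1 ∧ C = S.image (fun v => (v, false))}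

/-- The clauses `x_{i₁} ∨ ⋯ ∨ x_{i_{n-k+1}}` over the `n` variables in `Vars`. -/
def posClausesOn {V : Type} [DecidableEq V] (Vars : Finset V) (k : ℕ) : Set (Clause V) :=
  {C | ∃ S : Finset V, S ⊆ Vars ∧ S.card = Vars.card - k + 1 ∧ C = S.image (fun v => (v, true))}

/-- The weight of an assignment: the number of the `n` variables set to true. -/
def weight (n : ℕ) (α : ℕ → Bool) : ℕ :=
  ((Finset.range n).filter (fun i => α i = true)).card
/-- `Θ_{m,k}`: the CNF in the `n = m(k+1)` variables `v^j_i = m*i + j` (`i < k+1`, `j < m`),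
with the `k+1` clauses `v^1_i ∨ ⋯ ∨ v^m_i`. -/
def Theta (m k : ℕ) : Set (Clause ℕ) :=
  {C | ∃ i, i < k + 1 ∧ C = (Finset.range m).image (fun j => (m * i + j, true))}

/-- `Γ_Θ`: the `m^{k+1}` clauses `¬v^{a_1}_1 ∨ ⋯ ∨ ¬v^{a_{k+1}}_{k+1}` with `a_i ∈ [m]`. -/
def GammaTheta (m k : ℕ) : Set (Clause ℕ) :=
  {C | ∃ a : ℕ → ℕ, (∀ i, i < k + 1 → a i < m) ∧
    C = (Finset.range (k + 1)).image (fun i => (m * i + a i, false))}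

/-- `Ψ_{n,k}` (for `n` even): the CNF in variables `v_0, …, v_{n-1}` with clauses
`v_{2i} ∨ ¬v_{2i+1}` and `v_{2i+1} ∨ ¬v_{2i}` (i.e. `v_{2i} ↔ v_{2i+1}`). -/
def Psi (n : ℕ) : Set (Clause ℕ) :=
  {C | ∃ i, 2 * i + 1 < n ∧
    (C = {(2 * i, true), (2 * i + 1, false)} ∨ C = {(2 * i + 1, true), (2 * i, false)})}

/-- `Γ_Ψ` (for `k` odd): the `binom(n/2, (k+1)/2)` clauses
`¬v_{2a_1} ∨ ¬v_{2a_1+1} ∨ ⋯ ∨ ¬v_{2a_{(k+1)/2}} ∨ ¬v_{2a_{(k+1)/2}+1}` over sets `A` of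
`(k+1)/2` pairs. -/
def GammaPsi (n k : ℕ) : Set (Clause ℕ) :=
  {C | ∃ A : Finset ℕ, A ⊆ Finset.range (n / 2) ∧ A.card = (k + 1) / 2 ∧
    C = (A.biUnion (fun a => ({2 * a, 2 * a + 1} : Finset ℕ))).image (fun v => (v, false))}

/-- lower bound of the Lemma in Section 3.1: for `k` odd and `n` even,
every `W[1]`-parameterized Resolution refutation of `(Ψ_{n,k}, k)` — i.e. every Resolution
refutation of `Ψ_{n,k}` together with all clauses `¬x_{i₁} ∨ ⋯ ∨ ¬x_{i_{k+1}}` and all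
clauses `x_{i₁} ∨ ⋯ ∨ x_{i_{n-k+1}}` over its `n` variables — must contain, among the
clauses appearing in it, every clause of `Γ_Ψ`, and hence has size at least
`binom(n/2, (k+1)/2)`. -/
lemma resRefutation_falsified {V : Type} [DecidableEq V] {F : Set (Clause V)}
    (π : ResRefutation F) (α : V → Bool) :
    ∃ C ∈ F, C ∈ π.seq ∧ ¬ satClause α C := by
  classical
  have hlen : 0 < π.seq.length := List.length_pos_iff.2 π.ne
  let P : ℕ → Prop := fun i => ∃ h : i < π.seq.length, ¬ satClause α (π.seq[i]'h)
  have hex : ∃ i, P i := by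
    refine ⟨π.seq.length - 1, Nat.sub_lt hlen one_pos, ?_⟩
    have h : π.seq[π.seq.length - 1]'(Nat.sub_lt hlen one_pos) = (∅ : Clause V) := by
      rw [← π.lastEmpty, List.getLast_eq_getElem]
    rw [h]; simp [satClause]
  obtain ⟨hi, hns⟩ := Nat.find_spec hex
  set i := Nat.find hex with hidef
  have hmin : ∀ j, j < i → ∀ h : j < π.seq.length, satClause α (π.seq[j]'h) := by
    intro j hj h
    by_contra hc
    exact Nat.find_min hex hj ⟨h, hc⟩
  rcases π.valid i hi with hax | ⟨j, l, hj, hl, x, Pc, Qc, hP, hQ, hPQ⟩ | ⟨j, hj, lit, hw⟩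
  · exact ⟨_, hax, List.getElem_mem _, hns⟩
  · exfalso
    have hsj := hmin j hj (hj.trans hi)
    have hsl := hmin l hl (hl.trans hi)
    rw [hP] at hsj; rw [hQ] at hsl
    obtain ⟨a, ha, hea⟩ := hsj
    rcases Finset.mem_insert.1 ha with rfl | haP
    · obtain ⟨b, hb, heb⟩ := hsl
      rcases Finset.mem_insert.1 hb with rfl | hbQ
      · simp at hea heb; rw [hea] at heb; exact absurd heb (by simp)
      · exact hns ⟨b, by rw [hPQ]; exact Finset.mem_union_right _ hbQ, heb⟩
    · exact hns ⟨a, by rw [hPQ]; exact Finset.mem_union_left _ haP, hea⟩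
  · exfalso
    obtain ⟨a, ha, hea⟩ := hmin j hj (hj.trans hi)
    exact hns ⟨a, by rw [hw]; exact Finset.mem_insert_of_mem ha, hea⟩

/-- The set of variables set to true by the assignment associated to `A`. -/
def pairUnion (A : Finset ℕ) : Finset ℕ :=
  A.biUnion (fun a => ({2 * a, 2 * a + 1} : Finset ℕ))

lemma mem_pairUnion {A : Finset ℕ} {v : ℕ} : v ∈ pairUnion A ↔ v / 2 ∈ A := by
  simp only [pairUnion, Finset.mem_biUnion, Finset.mem_insert, Finset.mem_singleton]
  constructor
  · rintro ⟨a, ha, h | h⟩ <;> (have : v / 2 = a := by omega) <;> rwa [this]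
  · intro h; exact ⟨v / 2, h, by omega⟩

lemma card_pairUnion (A : Finset ℕ) : (pairUnion A).card = 2 * A.card := by
  rw [pairUnion, Finset.card_biUnion]
  · have h2 : ∀ a ∈ A, ({2 * a, 2 * a + 1} : Finset ℕ).card = 2 := fun a _ => by
      rw [Finset.card_insert_of_notMem (by simp), Finset.card_singleton]
    rw [Finset.sum_congr rfl h2, Finset.sum_const, smul_eq_mul, mul_comm]
  · intro a _ b _ hab
    simp only [Finset.disjoint_left, Finset.mem_insert, Finset.mem_singleton]
    omega

lemma pairUnion_injective {A B : Finset ℕ} (h : pairUnion A = pairUnion B) : A = B := by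
  ext a
  have h2 : (2 * a) / 2 = a := by omega
  constructor <;> intro ha
  · have : 2 * a ∈ pairUnion A := mem_pairUnion.2 (by rwa [h2])
    rw [h] at this; have := mem_pairUnion.1 this; rwa [h2] at this
  · have : 2 * a ∈ pairUnion B := mem_pairUnion.2 (by rwa [h2])
    rw [← h] at this; have := mem_pairUnion.1 this; rwa [h2] at this

lemma gamma_mem_seq (n k : ℕ) (hn : Even n) (hk : Odd k)
    (π : ResRefutation (Psi n ∪ negClausesOn (Finset.range n) k ∪
      posClausesOn (Finset.range n) k))
    (A : Finset ℕ) (hA : A ⊆ Finset.range (n / 2)) (hcard : A.card = (k + 1) / 2) :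
    (pairUnion A).image (fun v => (v, false)) ∈ π.seq := by
  classical
  set α : ℕ → Bool := fun v => decide (v / 2 ∈ A) with hα
  obtain ⟨C, hCF, hCseq, hns⟩ := resRefutation_falsified π α
  suffices hCγ : C = (pairUnion A).image (fun v => (v, false)) by rwa [hCγ] at hCseq
  have hk1 : (pairUnion A).card = k + 1 := by
    rw [card_pairUnion, hcard]; obtain ⟨m, rfl⟩ := hk; omega
  have hTsub : pairUnion A ⊆ Finset.range n := by
    intro v hv
    rw [mem_pairUnion] at hv
    have h1 := Finset.mem_range.1 (hA hv)
    obtain ⟨m, rfl⟩ := hn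
    rw [Finset.mem_range]
    omega
  rcases hCF with (hpsi | hneg) | hpos
  · exfalso
    obtain ⟨i, hi, hC | hC⟩ := hpsi <;> subst hC <;> apply hns <;>
        have e1 : (2 * i) / 2 = i := by omega
    all_goals have e2 : (2 * i + 1) / 2 = i := by omega
    · by_cases h : i ∈ A
      · exact ⟨(2 * i, true), by simp, by simp [hα, e1, h]⟩
      · exact ⟨(2 * i + 1, false), by simp, by simp [hα, e2, h]⟩
    · by_cases h : i ∈ A
      · exact ⟨(2 * i + 1, true), by simp, by simp [hα, e2, h]⟩
      · exact ⟨(2 * i, false), by simp, by simp [hα, e1, h]⟩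
  · obtain ⟨S, hS, hScard, rfl⟩ := hneg
    have hsub : S ⊆ pairUnion A := by
      intro v hv
      rw [mem_pairUnion]
      by_contra h
      exact hns ⟨(v, false), Finset.mem_image_of_mem _ hv, by simp [hα, h]⟩
    rw [Finset.eq_of_subset_of_card_le hsub (by rw [hk1, hScard])]
  · exfalso
    obtain ⟨S, hS, hScard, rfl⟩ := hpos
    have hsub : S ⊆ Finset.range n \ pairUnion A := by
      intro v hv
      rw [Finset.mem_sdiff, mem_pairUnion]
      refine ⟨hS hv, fun h => ?_⟩
      exact hns ⟨(v, true), Finset.mem_image_of_mem _ hv, by simp [hα, h]⟩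
    have hkn := Finset.card_le_card hTsub
    rw [hk1, Finset.card_range] at hkn
    have hc := Finset.card_le_card hsub
    rw [Finset.card_sdiff_of_subset hTsub, hk1, Finset.card_range] at hc
    rw [Finset.card_range] at hScard
    omega


theorem psi_W1_lower_bound' (n k : ℕ) (hn : Even n) (hk : Odd k)
    (π : ResRefutation (Psi n ∪ negClausesOn (Finset.range n) k ∪
      posClausesOn (Finset.range n) k)) :
    (∀ γ ∈ GammaPsi n k, γ ∈ π.seq) ∧ Nat.choose (n / 2) ((k + 1) / 2) ≤ π.size := by
  have key : ∀ γ ∈ GammaPsi n k, γ ∈ π.seq := by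
    rintro γ ⟨A, hA, hc, rfl⟩
    exact gamma_mem_seq n k hn hk π A hA hc
  refine ⟨key, ?_⟩
  have h1 : Nat.choose (n / 2) ((k + 1) / 2) =
      (Finset.powersetCard ((k + 1) / 2) (Finset.range (n / 2))).card := by
    rw [Finset.card_powersetCard, Finset.card_range]
  rw [h1]
  have h2 : (Finset.powersetCard ((k + 1) / 2) (Finset.range (n / 2))).card ≤
      π.seq.toFinset.card := by
    apply Finset.card_le_card_of_injOn (fun A => (pairUnion A).image (fun v => (v, false)))
    · intro A hA
      rw [Finset.mem_coe, Finset.mem_powersetCard] at hA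
      rw [Finset.mem_coe, List.mem_toFinset]
      exact key _ ⟨A, hA.1, hA.2, rfl⟩
    · intro A _ B _ h
      apply pairUnion_injective
      have hA := congrArg (fun C : Clause ℕ => C.image Prod.fst) h
      have e : ∀ S : Finset ℕ, (S.image (fun v => (v, false))).image Prod.fst = S := by
        intro S
        rw [Finset.image_image]
        exact Finset.image_id
      simp only at hA
      rwa [e, e] at hA
  exact h2.trans (π.seq.toFinset_card_le.trans_eq rfl)


theorem psi_W1_lower_bound (n k : ℕ) (hn : Even n) (hk : Odd k)
    (π : ResRefutation (Psi n ∪ negClausesOn (Finset.range n) k ∪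
      posClausesOn (Finset.range n) k)) :
    (∀ γ ∈ GammaPsi n k, γ ∈ π.seq) ∧ Nat.choose (n / 2) ((k + 1) / 2) ≤ π.size := by
  exact psi_W1_lower_bound' n k hn hk π
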